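/- Pseudo-population factorization for stabilized weights (equation (B.2.1)): Assume (A2) and (A3). Then for every ā, b̄ ∈ {0,1}^K and every Borel set B ⊆ ℝ: 𝔼[W_sw · 1{Y^{ā} ∈ B} · 1{Ā(K−1) = b̄}] = P(Y^{ā} ∈ B) · P(Ā(K−1) = b̄). That is, in the pseudo-population obtained by weighting by W_sw, the potential outcome Y^{ā} and the treatment history Ā(K−1) are independent, each retaining its original marginal distribution. -/

import Mathlib

open MeasureTheory Finset
open scoped Classical

namespace MSMPaper

noncomputable section

variable {Ω : Type*} [MeasurableSpace Ω] {𝓛 : Type*}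

/-- Conditional probability `P(E | F) = P(E ∩ F) / P(F)` as a real number
(junk value `0` when `P F = 0`). -/
def cP (P : Measure Ω) (E F : Set Ω) : ℝ := (P (E ∩ F)).toReal / (P F).toReal

variable {K : ℕ}

/-- Event `Ā(t−1) = b̄` (treatment history up to, not including, time `t`). -/
def Apast (A : Fin K → Ω → Bool) (t : ℕ) (b : Fin K → Bool) : Set Ω :=
  {ω | ∀ k : Fin K, (k : ℕ) < t → A k ω = b k}

/-- Event `L̄(t) = l̄` (covariate history up to and including time `t`). -/
def Lpast (L : Fin K → Ω → 𝓛) (t : ℕ) (l : Fin K → 𝓛) : Set Ω :=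
  {ω | ∀ k : Fin K, (k : ℕ) ≤ t → L k ω = l k}

/-- Event `A̲(s, t−1) = b` (treatment history from time `s` up to, not including, `t`). -/
def Aseg (A : Fin K → Ω → Bool) (s t : ℕ) (b : Fin K → Bool) : Set Ω :=
  {ω | ∀ k : Fin K, s ≤ (k : ℕ) → (k : ℕ) < t → A k ω = b k}

/-- Event `A̲(K−m) = a̲` for a (last-`m`) treatment vector `as`. -/
def EtrV (A : Fin K → Ω → Bool) (m : ℕ) (as : Fin K → Bool) : Set Ω :=
  {ω | ∀ k : Fin K, K - m ≤ (k : ℕ) → A k ω = as k}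

/-- Event `A̲(K−m) = a_m` (constant `a` on the last `m` coordinates). -/
def Etr (A : Fin K → Ω → Bool) (m : ℕ) (a : Bool) : Set Ω :=
  EtrV A m (fun _ => a)

/-- Stabilized weights `W_sw`. -/
def Wsw (P : Measure Ω) (A : Fin K → Ω → Bool) (L : Fin K → Ω → 𝓛) : Ω → ℝ :=
  fun ω => ∏ k : Fin K,
    cP P {ω' | A k ω' = A k ω} (Apast A (k : ℕ) (fun j => A j ω)) /
      cP P {ω' | A k ω' = A k ω}
        (Lpast L (k : ℕ) (fun j => L j ω) ∩ Apast A (k : ℕ) (fun j => A j ω))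

/-- Restricted stabilized weights `W_rsw^(m)`. -/
def Wrsw (P : Measure Ω) (A : Fin K → Ω → Bool) (L : Fin K → Ω → 𝓛) (m : ℕ) : Ω → ℝ :=
  fun ω => ∏ k ∈ Finset.univ.filter (fun k : Fin K => K - m ≤ (k : ℕ)),
    cP P {ω' | A k ω' = A k ω} (Aseg A (K - m) (k : ℕ) (fun j => A j ω)) /
      cP P {ω' | A k ω' = A k ω}
        (Lpast L (k : ℕ) (fun j => L j ω) ∩ Apast A (k : ℕ) (fun j => A j ω))

/-- Partial stabilized weights `W_psw^(m)`. -/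
def Wpsw (P : Measure Ω) (A : Fin K → Ω → Bool) (L : Fin K → Ω → 𝓛) (m : ℕ) : Ω → ℝ :=
  fun ω => ∏ k ∈ Finset.univ.filter (fun k : Fin K => K - m ≤ (k : ℕ)),
    cP P {ω' | A k ω' = A k ω} (Apast A (k : ℕ) (fun j => A j ω)) /
      cP P {ω' | A k ω' = A k ω}
        (Lpast L (k : ℕ) (fun j => L j ω) ∩ Apast A (k : ℕ) (fun j => A j ω))

/-- IP-weighted contrast `θ_W^(m)`. -/
def θW (P : Measure Ω) (A : Fin K → Ω → Bool) (m : ℕ) (W Y : Ω → ℝ) : ℝ :=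
  (∫ ω in Etr A m true, W ω * Y ω ∂P) / (∫ ω in Etr A m true, W ω ∂P) -
    (∫ ω in Etr A m false, W ω * Y ω ∂P) / (∫ ω in Etr A m false, W ω ∂P)

/-- `rev j` is the time index `K − 1 − j`; the paper's coefficient `ψ_{j+1}`
multiplies `a(K − (j+1)) = a(rev j)`. -/
def rev (j : Fin K) : Fin K := ⟨K - 1 - (j : ℕ), by have := j.isLt; omega⟩

/-- `θ^(K) = 𝔼[Y^{1_K}] − 𝔼[Y^{0_K}]`. -/
def θKfull (P : Measure Ω) (Ypot : (Fin K → Bool) → Ω → ℝ) : ℝ :=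
  (∫ ω, Ypot (fun _ => true) ω ∂P) - ∫ ω, Ypot (fun _ => false) ω ∂P

/-- (A1) consistency. -/
def A1ok (A : Fin K → Ω → Bool) (Y : Ω → ℝ) (Ypot : (Fin K → Bool) → Ω → ℝ) : Prop :=
  ∀ (a : Fin K → Bool) (ω : Ω), (∀ k, A k ω = a k) → Y ω = Ypot a ω

/-- (A2) sequential exchangeability. -/
def A2ok (P : Measure Ω) (A : Fin K → Ω → Bool) (L : Fin K → Ω → 𝓛)
    (Ypot : (Fin K → Bool) → Ω → ℝ) : Prop :=
  ∀ (t : Fin K) (a : Fin K → Bool) (B : Set ℝ), MeasurableSet B →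
    ∀ (av : Bool) (l : Fin K → 𝓛) (b : Fin K → Bool),
      0 < P (Lpast L (t : ℕ) l ∩ Apast A (t : ℕ) b) →
      cP P ({ω | Ypot a ω ∈ B} ∩ {ω | A t ω = av}) (Lpast L (t : ℕ) l ∩ Apast A (t : ℕ) b) =
        cP P {ω | Ypot a ω ∈ B} (Lpast L (t : ℕ) l ∩ Apast A (t : ℕ) b) *
          cP P {ω | A t ω = av} (Lpast L (t : ℕ) l ∩ Apast A (t : ℕ) b)

/-- (A3) positivity. -/
def A3ok (P : Measure Ω) (A : Fin K → Ω → Bool) (L : Fin K → Ω → 𝓛) : Prop :=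
  ∀ (t : Fin K) (av : Bool) (l : Fin K → 𝓛) (b : Fin K → Bool),
    0 < P (Lpast L (t : ℕ) l ∩ Apast A (t : ℕ) b) →
    0 < cP P {ω | A t ω = av} (Lpast L (t : ℕ) l ∩ Apast A (t : ℕ) b)

/-- The marginal structural model `𝔼[Y^{ā}] = ψ₀ + Σ_{j=1}^K ψ_j a(K−j)`;
here `ψ j` is the paper's `ψ_{j+1}`, the coefficient of `a(K−1−j)`. -/
def MSMeq (P : Measure Ω) (Ypot : (Fin K → Bool) → Ω → ℝ) (ψ0 : ℝ) (ψ : Fin K → ℝ) : Prop :=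
  ∀ a : Fin K → Bool,
    (∫ ω, Ypot a ω ∂P) = ψ0 + ∑ j : Fin K, ψ j * (if a (rev j) = true then 1 else 0)

/-- (A5) conditional MSM given the past treatment history `Ā(K−m−1)`. -/
def A5ok (P : Measure Ω) (A : Fin K → Ω → Bool) (Ypot : (Fin K → Bool) → Ω → ℝ)
    (m : ℕ) : Prop :=
  ∀ b : Fin K → Bool, 0 < P (Apast A (K - m) b) →
    ∃ (φ0 : ℝ) (φ : Fin K → ℝ), ∀ a : Fin K → Bool,
      (∫ ω in Apast A (K - m) b, Ypot a ω ∂P) / (P (Apast A (K - m) b)).toReal =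
        φ0 + ∑ j : Fin K, φ j * (if a (rev j) = true then 1 else 0)

/-- `q_{j+1} = P(A(K−1−j)=1 | A̲(K−m)=1_m) − P(A(K−1−j)=1 | A̲(K−m)=0_m)`. -/
def qcoef (P : Measure Ω) (A : Fin K → Ω → Bool) (m : ℕ) (j : Fin K) : ℝ :=
  cP P {ω | A (rev j) ω = true} (Etr A m true) -
    cP P {ω | A (rev j) ω = true} (Etr A m false)

end

noncomputable section Aux

variable {Ω : Type*} [MeasurableSpace Ω] {𝓛 : Type*} {K : ℕ}

/-- Strict-past covariate history event: `L̄(t−1) = l̄`. -/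
def LLt (L : Fin K → Ω → 𝓛) (t : ℕ) (l : Fin K → 𝓛) : Set Ω :=
  {ω | ∀ k : Fin K, (k : ℕ) < t → L k ω = l k}

/-- Marginal treatment probability at time `k` along history `b`. -/
def piT (P : Measure Ω) (A : Fin K → Ω → Bool) (b : Fin K → Bool) (k : Fin K) : ℝ :=
  cP P {ω' | A k ω' = b k} (Apast A (k : ℕ) b)

/-- Conditional treatment probability at time `k` along history `(l, b)`. -/
def gT (P : Measure Ω) (A : Fin K → Ω → Bool) (L : Fin K → Ω → 𝓛)
    (b : Fin K → Bool) (l : Fin K → 𝓛) (k : Fin K) : ℝ :=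
  cP P {ω' | A k ω' = b k} (Lpast L (k : ℕ) l ∩ Apast A (k : ℕ) b)

/-- The partially-weighted sum at stage `t`. -/
def UT [Fintype 𝓛] (P : Measure Ω) (A : Fin K → Ω → Bool) (L : Fin K → Ω → 𝓛)
    (YB : Set Ω) (b : Fin K → Bool) (t : ℕ) : ℝ :=
  ∑ l : Fin K → 𝓛,
    (∏ k ∈ univ.filter (fun k : Fin K => (k : ℕ) < t), piT P A b k / gT P A L b l k) *
      (P (YB ∩ LLt L t l ∩ Apast A t b)).toReal

lemma Lpast_eq_LLt (L : Fin K → Ω → 𝓛) (m : ℕ) (l : Fin K → 𝓛) :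
    Lpast L m l = LLt L (m + 1) l := by
  ext ω
  simp only [Lpast, LLt, Set.mem_setOf_eq, Nat.lt_succ_iff]

lemma Apast_congr (A : Fin K → Ω → Bool) (m : ℕ) {b₁ b₂ : Fin K → Bool}
    (h : ∀ j : Fin K, (j : ℕ) < m → b₁ j = b₂ j) : Apast A m b₁ = Apast A m b₂ := by
  ext ω
  exact ⟨fun hω j hj => (hω j hj).trans (h j hj),
    fun hω j hj => (hω j hj).trans (h j hj).symm⟩

lemma Lpast_congr (L : Fin K → Ω → 𝓛) (m : ℕ) {l₁ l₂ : Fin K → 𝓛}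
    (h : ∀ j : Fin K, (j : ℕ) ≤ m → l₁ j = l₂ j) : Lpast L m l₁ = Lpast L m l₂ := by
  ext ω
  exact ⟨fun hω j hj => (hω j hj).trans (h j hj),
    fun hω j hj => (hω j hj).trans (h j hj).symm⟩

lemma LLt_update (L : Fin K → Ω → 𝓛) (t : Fin K) (l : Fin K → 𝓛) (c : 𝓛) :
    LLt L ((t : ℕ) + 1) (Function.update l t c) = LLt L (t : ℕ) l ∩ {ω | L t ω = c} := by
  ext ω
  simp only [LLt, Set.mem_setOf_eq, Set.mem_inter_iff]
  constructor
  · intro h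
    refine ⟨fun k hk => ?_, ?_⟩
    · have hkt : k ≠ t := fun he => by simp [he] at hk
      have := h k (by omega)
      rwa [Function.update_of_ne hkt] at this
    · have := h t (by omega)
      rwa [Function.update_self] at this
  · rintro ⟨h1, h2⟩ k hk
    by_cases hkt : k = t
    · subst hkt; rwa [Function.update_self]
    · rw [Function.update_of_ne hkt]
      have : (k : ℕ) ≠ (t : ℕ) := fun he => hkt (Fin.ext he)
      exact h1 k (by omega)

lemma Apast_succ (A : Fin K → Ω → Bool) (t : Fin K) (b : Fin K → Bool) :
    Apast A ((t : ℕ) + 1) b = {ω | A t ω = b t} ∩ Apast A (t : ℕ) b := by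
  ext ω
  simp only [Apast, Set.mem_setOf_eq, Set.mem_inter_iff]
  constructor
  · intro h
    exact ⟨h t (by omega), fun k hk => h k (by omega)⟩
  · rintro ⟨h1, h2⟩ k hk
    by_cases hkt : k = t
    · subst hkt; exact h1
    · have : (k : ℕ) ≠ (t : ℕ) := fun he => hkt (Fin.ext he)
      exact h2 k (by omega)

lemma filter_lt_succ (t : Fin K) :
    univ.filter (fun k : Fin K => (k : ℕ) < (t : ℕ) + 1) =
      insert t (univ.filter (fun k : Fin K => (k : ℕ) < (t : ℕ))) := by
  ext k
  simp only [mem_filter, mem_univ, true_and, mem_insert]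
  constructor
  · intro h
    rcases Nat.lt_succ_iff_lt_or_eq.mp h with h' | h'
    · exact Or.inr h'
    · exact Or.inl (Fin.ext h')
  · rintro (rfl | h)
    · omega
    · omega

lemma measurableSet_LLt [MeasurableSpace 𝓛] [MeasurableSingletonClass 𝓛]
    {L : Fin K → Ω → 𝓛} (hL : ∀ k, Measurable (L k)) (t : ℕ) (l : Fin K → 𝓛) :
    MeasurableSet (LLt L t l) := by
  have : LLt L t l = ⋂ k : Fin K, ⋂ _h : (k : ℕ) < t, L k ⁻¹' {l k} := by
    ext ω; simp [LLt]
  rw [this]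
  exact MeasurableSet.iInter fun k => MeasurableSet.iInter fun _ =>
    (hL k) (measurableSet_singleton _)

lemma measurableSet_Apast {A : Fin K → Ω → Bool} (hA : ∀ k, Measurable (A k))
    (t : ℕ) (b : Fin K → Bool) : MeasurableSet (Apast A t b) := by
  have : Apast A t b = ⋂ k : Fin K, ⋂ _h : (k : ℕ) < t, A k ⁻¹' {b k} := by
    ext ω; simp [Apast]
  rw [this]
  exact MeasurableSet.iInter fun k => MeasurableSet.iInter fun _ =>
    (hA k) (measurableSet_singleton _)

lemma UT_zero [Fintype 𝓛] (P : Measure Ω) [IsProbabilityMeasure P]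
    (A : Fin K → Ω → Bool) (L : Fin K → Ω → 𝓛) (YB : Set Ω) (b : Fin K → Bool) :
    UT P A L YB b 0 = (Fintype.card 𝓛 : ℝ) ^ K * (P YB).toReal := by
  have h1 : ∀ l : Fin K → 𝓛, LLt L 0 l = Set.univ := by
    intro l; ext ω; simp [LLt]
  have h2 : Apast A 0 b = Set.univ := by
    ext ω; simp [Apast]
  have h3 : univ.filter (fun k : Fin K => (k : ℕ) < 0) = (∅ : Finset (Fin K)) := by
    ext k; simp
  simp only [UT, h3, prod_empty, one_mul]
  have : ∀ l : Fin K → 𝓛, YB ∩ LLt L 0 l ∩ Apast A 0 b = YB := by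
    intro l; rw [h1, h2]; simp
  simp only [this]
  rw [Finset.sum_const, Finset.card_univ]
  have hcard : Fintype.card (Fin K → 𝓛) = Fintype.card 𝓛 ^ K := by
    rw [Fintype.card_fun, Fintype.card_fin]
  rw [hcard, nsmul_eq_mul]
  push_cast
  ring

set_option linter.unusedSectionVars false

lemma cP_mul_toReal (P : Measure Ω) (X E : Set Ω) (h : (P E).toReal ≠ 0) :
    cP P X E * (P E).toReal = (P (X ∩ E)).toReal :=
  div_mul_cancel₀ _ h

lemma sum_toReal_inter_L [Fintype 𝓛] [MeasurableSpace 𝓛] [MeasurableSingletonClass 𝓛]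
    (P : Measure Ω) [IsProbabilityMeasure P] {L : Fin K → Ω → 𝓛}
    (hL : ∀ k, Measurable (L k)) (t : Fin K) {X : Set Ω} (hX : MeasurableSet X) :
    ∑ c : 𝓛, (P (X ∩ {ω | L t ω = c})).toReal = (P X).toReal := by
  have hXc : ∀ c : 𝓛, MeasurableSet (X ∩ {ω | L t ω = c}) := fun c =>
    hX.inter ((hL t) (measurableSet_singleton c))
  have hU : X = ⋃ c : 𝓛, X ∩ {ω | L t ω = c} := by
    ext ω
    simp only [Set.mem_iUnion, Set.mem_inter_iff, Set.mem_setOf_eq]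
    exact ⟨fun h => ⟨L t ω, h, rfl⟩, fun ⟨c, h, _⟩ => h⟩
  have hdisj : Pairwise (Function.onFun Disjoint (fun c : 𝓛 => X ∩ {ω | L t ω = c})) := by
    intro c c' hcc'
    simp only [Function.onFun, Set.disjoint_left]
    rintro ω ⟨-, h1⟩ ⟨-, h2⟩
    exact hcc' (h1.symm.trans h2)
  have := measure_iUnion hdisj hXc (μ := P)
  rw [← hU, tsum_fintype] at this
  rw [← ENNReal.toReal_sum (fun c _ => measure_ne_top P _), ← this]

lemma UT_step [Fintype 𝓛] [MeasurableSpace 𝓛] [MeasurableSingletonClass 𝓛]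
    (P : Measure Ω) [IsProbabilityMeasure P]
    (A : Fin K → Ω → Bool) (L : Fin K → Ω → 𝓛)
    (hA : ∀ k, Measurable (A k)) (hL : ∀ k, Measurable (L k))
    (Ypot : (Fin K → Bool) → Ω → ℝ) (hYpm : ∀ a, Measurable (Ypot a))
    (hA2 : A2ok P A L Ypot) (hA3 : A3ok P A L)
    (a b : Fin K → Bool) (B : Set ℝ) (hB : MeasurableSet B) (t : Fin K) :
    (Fintype.card 𝓛 : ℝ) * UT P A L {ω | Ypot a ω ∈ B} b ((t : ℕ) + 1) =
      piT P A b t * UT P A L {ω | Ypot a ω ∈ B} b (t : ℕ) := by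
  set YB : Set Ω := {ω | Ypot a ω ∈ B} with hYBdef
  have hYB : MeasurableSet YB := (hYpm a) hB
  set F : (Fin K → 𝓛) → ℝ := fun l =>
    (∏ k ∈ univ.filter (fun k : Fin K => (k : ℕ) < (t : ℕ) + 1),
        piT P A b k / gT P A L b l k) *
      (P (YB ∩ LLt L ((t : ℕ) + 1) l ∩ Apast A ((t : ℕ) + 1) b)).toReal with hFdef
  -- the involution (l, c) ↦ (update l t c, l t)
  have hinv : Function.Involutive
      (fun p : (Fin K → 𝓛) × 𝓛 => (Function.update p.1 t p.2, p.1 t)) := by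
    rintro ⟨l, c⟩
    simp only [Prod.mk.injEq]
    constructor
    · funext j
      by_cases hj : j = t
      · subst hj; rw [Function.update_self]
      · simp only [Function.update_of_ne hj]
    · rw [Function.update_self]
  have h1 : (Fintype.card 𝓛 : ℝ) * UT P A L YB b ((t : ℕ) + 1) =
      ∑ l : Fin K → 𝓛, ∑ c : 𝓛, F (Function.update l t c) := by
    let e : (Fin K → 𝓛) × 𝓛 ≃ (Fin K → 𝓛) × 𝓛 :=
      ⟨fun p => (Function.update p.1 t p.2, p.1 t),
       fun p => (Function.update p.1 t p.2, p.1 t), hinv, hinv⟩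
    have h2 : ∑ l : Fin K → 𝓛, ∑ c : 𝓛, F (Function.update l t c) =
        ∑ p : (Fin K → 𝓛) × 𝓛, F (Function.update p.1 t p.2) := by
      rw [Fintype.sum_prod_type]
    have h3 : ∑ p : (Fin K → 𝓛) × 𝓛, F (Function.update p.1 t p.2) =
        ∑ p : (Fin K → 𝓛) × 𝓛, F p.1 := by
      have h := Equiv.sum_comp e (fun p : (Fin K → 𝓛) × 𝓛 => F p.1)
      exact h
    rw [h2, h3, Fintype.sum_prod_type]
    simp only [Finset.sum_const, Finset.card_univ, nsmul_eq_mul]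
    rw [UT, Finset.mul_sum]
  rw [h1]
  -- per-(l,c) identity
  have key : ∀ (l : Fin K → 𝓛) (c : 𝓛), F (Function.update l t c) =
      piT P A b t *
        ((∏ k ∈ univ.filter (fun k : Fin K => (k : ℕ) < (t : ℕ)),
            piT P A b k / gT P A L b l k) *
          (P ((YB ∩ LLt L (t : ℕ) l ∩ Apast A (t : ℕ) b) ∩ {ω | L t ω = c})).toReal) := by
    intro l c
    have hprodsplit :
        (∏ k ∈ univ.filter (fun k : Fin K => (k : ℕ) < (t : ℕ) + 1),
            piT P A b k / gT P A L b (Function.update l t c) k) =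
          (piT P A b t / gT P A L b (Function.update l t c) t) *
            ∏ k ∈ univ.filter (fun k : Fin K => (k : ℕ) < (t : ℕ)),
              piT P A b k / gT P A L b l k := by
      rw [filter_lt_succ, Finset.prod_insert (by simp)]
      congr 1
      refine Finset.prod_congr rfl fun k hk => ?_
      simp only [mem_filter] at hk
      have : Lpast L (k : ℕ) (Function.update l t c) = Lpast L (k : ℕ) l := by
        refine Lpast_congr L _ fun j hj => ?_
        have hjt : j ≠ t := fun he => by
          subst he; omega
        exact Function.update_of_ne hjt c l
      simp only [gT, this]
    -- the conditioning event
    set E : Set Ω := Lpast L (t : ℕ) (Function.update l t c) ∩ Apast A (t : ℕ) b with hEdef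
    have hEalt : E = (LLt L (t : ℕ) l ∩ {ω | L t ω = c}) ∩ Apast A (t : ℕ) b := by
      rw [hEdef, Lpast_eq_LLt, LLt_update]
    have hset1 : YB ∩ LLt L ((t : ℕ) + 1) (Function.update l t c) ∩
        Apast A ((t : ℕ) + 1) b = (YB ∩ {ω | A t ω = b t}) ∩ E := by
      rw [LLt_update, Apast_succ, hEalt]
      ext ω
      simp only [Set.mem_inter_iff, Set.mem_setOf_eq]
      tauto
    have hset2 : (YB ∩ LLt L (t : ℕ) l ∩ Apast A (t : ℕ) b) ∩ {ω | L t ω = c} =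
        YB ∩ E := by
      rw [hEalt]
      ext ω
      simp only [Set.mem_inter_iff, Set.mem_setOf_eq]
      tauto
    rw [hFdef]
    simp only
    rw [hprodsplit, hset1, hset2]
    rcases eq_or_lt_of_le (zero_le : (0 : ENNReal) ≤ P E) with hE0 | hEpos
    · have hz1 : P ((YB ∩ {ω | A t ω = b t}) ∩ E) = 0 :=
        measure_mono_null Set.inter_subset_right hE0.symm
      have hz2 : P (YB ∩ E) = 0 :=
        measure_mono_null Set.inter_subset_right hE0.symm
      rw [hz1, hz2]
      simp
    · have hg : 0 < gT P A L b (Function.update l t c) t := hA3 t (b t) _ b hEpos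
      have hEtr : (P E).toReal ≠ 0 :=
        ENNReal.toReal_ne_zero.mpr ⟨hEpos.ne', measure_ne_top P E⟩
      have hx := hA2 t a B hB (b t) (Function.update l t c) b hEpos
      rw [← hYBdef, ← hEdef] at hx
      have hcp1 : (P ((YB ∩ {ω | A t ω = b t}) ∩ E)).toReal =
          cP P (YB ∩ {ω | A t ω = b t}) E * (P E).toReal :=
        (cP_mul_toReal P _ E hEtr).symm
      have hcp2 : cP P YB E * (P E).toReal = (P (YB ∩ E)).toReal :=
        cP_mul_toReal P _ E hEtr
      have hgdef : gT P A L b (Function.update l t c) t = cP P {ω | A t ω = b t} E := rfl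
      rw [hcp1, hx, ← hgdef, ← hcp2]
      have hgne : gT P A L b (Function.update l t c) t ≠ 0 := ne_of_gt hg
      have halg : ∀ (x g C q p : ℝ), g ≠ 0 → (x / g * C) * (q * g * p) = x * (C * (q * p)) := by
        intro x g C q p hg0
        field_simp
      exact halg _ _ _ _ _ hgne
  calc ∑ l : Fin K → 𝓛, ∑ c : 𝓛, F (Function.update l t c)
      = ∑ l : Fin K → 𝓛, piT P A b t *
          ((∏ k ∈ univ.filter (fun k : Fin K => (k : ℕ) < (t : ℕ)),
              piT P A b k / gT P A L b l k) *
            (P (YB ∩ LLt L (t : ℕ) l ∩ Apast A (t : ℕ) b)).toReal) := by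
        refine Finset.sum_congr rfl fun l _ => ?_
        have hX : MeasurableSet (YB ∩ LLt L (t : ℕ) l ∩ Apast A (t : ℕ) b) :=
          (hYB.inter (measurableSet_LLt hL _ _)).inter (measurableSet_Apast hA _ _)
        calc ∑ c : 𝓛, F (Function.update l t c)
            = ∑ c : 𝓛, piT P A b t *
                ((∏ k ∈ univ.filter (fun k : Fin K => (k : ℕ) < (t : ℕ)),
                    piT P A b k / gT P A L b l k) *
                  (P ((YB ∩ LLt L (t : ℕ) l ∩ Apast A (t : ℕ) b) ∩
                      {ω | L t ω = c})).toReal) :=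
              Finset.sum_congr rfl fun c _ => key l c
          _ = piT P A b t *
                ((∏ k ∈ univ.filter (fun k : Fin K => (k : ℕ) < (t : ℕ)),
                    piT P A b k / gT P A L b l k) *
                  ∑ c : 𝓛, (P ((YB ∩ LLt L (t : ℕ) l ∩ Apast A (t : ℕ) b) ∩
                      {ω | L t ω = c})).toReal) := by
              rw [← Finset.mul_sum, ← Finset.mul_sum]
          _ = piT P A b t *
                ((∏ k ∈ univ.filter (fun k : Fin K => (k : ℕ) < (t : ℕ)),
                    piT P A b k / gT P A L b l k) *
                  (P (YB ∩ LLt L (t : ℕ) l ∩ Apast A (t : ℕ) b)).toReal) := by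
              rw [sum_toReal_inter_L P hL t hX]
    _ = piT P A b t * UT P A L YB b (t : ℕ) := by
        rw [UT, Finset.mul_sum]

lemma prod_piT (P : Measure Ω) [IsProbabilityMeasure P]
    (A : Fin K → Ω → Bool) (b : Fin K → Bool) (hAB : P (Apast A K b) ≠ 0) :
    ∀ t, t ≤ K →
      ∏ k ∈ univ.filter (fun k : Fin K => (k : ℕ) < t), piT P A b k =
        (P (Apast A t b)).toReal := by
  intro t
  induction t with
  | zero =>
    intro _
    have h3 : univ.filter (fun k : Fin K => (k : ℕ) < 0) = (∅ : Finset (Fin K)) := by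
      ext k; simp
    have h2 : Apast A 0 b = Set.univ := by ext ω; simp [Apast]
    rw [h3, prod_empty, h2, measure_univ, ENNReal.toReal_one]
  | succ t ih =>
    intro ht
    have htK : t < K := ht
    set tF : Fin K := ⟨t, htK⟩ with htF
    have hsub : Apast A K b ⊆ Apast A t b := fun ω hω k hk => hω k k.isLt
    have hpos : P (Apast A t b) ≠ 0 := fun h => hAB (measure_mono_null hsub h)
    have htr : (P (Apast A t b)).toReal ≠ 0 :=
      ENNReal.toReal_ne_zero.mpr ⟨hpos, measure_ne_top P _⟩
    have hcast : ((tF : ℕ)) = t := rfl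
    have hfilt : univ.filter (fun k : Fin K => (k : ℕ) < t + 1) =
        insert tF (univ.filter (fun k : Fin K => (k : ℕ) < t)) := by
      have := filter_lt_succ (K := K) tF
      rwa [hcast] at this
    rw [hfilt, Finset.prod_insert (by simp [hcast]), ih (le_of_lt htK)]
    have hsplit : Apast A (t + 1) b = {ω | A tF ω = b tF} ∩ Apast A t b := by
      have := Apast_succ A tF b
      rwa [hcast] at this
    rw [hsplit]
    show piT P A b tF * (P (Apast A t b)).toReal = _
    rw [piT, cP, hcast, div_mul_cancel₀ _ htr]

lemma integral_eq_UT [Fintype 𝓛] [MeasurableSpace 𝓛] [MeasurableSingletonClass 𝓛]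
    (P : Measure Ω) [IsProbabilityMeasure P]
    (A : Fin K → Ω → Bool) (L : Fin K → Ω → 𝓛)
    (hA : ∀ k, Measurable (A k)) (hL : ∀ k, Measurable (L k))
    (Ypot : (Fin K → Bool) → Ω → ℝ) (hYpm : ∀ a, Measurable (Ypot a))
    (a b : Fin K → Bool) (B : Set ℝ) (hB : MeasurableSet B) :
    (∫ ω, Wsw P A L ω * (if Ypot a ω ∈ B then (1 : ℝ) else 0) *
        (if ω ∈ Apast A K b then (1 : ℝ) else 0) ∂P) =
      UT P A L {ω | Ypot a ω ∈ B} b K := by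
  have hYB : MeasurableSet {ω | Ypot a ω ∈ B} := (hYpm a) hB
  set C : (Fin K → 𝓛) → ℝ := fun l =>
    ∏ k ∈ univ.filter (fun k : Fin K => (k : ℕ) < K), piT P A b k / gT P A L b l k
    with hCdef
  have hfun : ∀ ω, Wsw P A L ω * (if Ypot a ω ∈ B then (1 : ℝ) else 0) *
      (if ω ∈ Apast A K b then (1 : ℝ) else 0) =
      ∑ l : Fin K → 𝓛, Set.indicator
        ({ω | Ypot a ω ∈ B} ∩ LLt L K l ∩ Apast A K b) (fun _ => C l) ω := by
    intro ω
    set l₀ : Fin K → 𝓛 := fun j => L j ω with hl₀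
    rw [Finset.sum_eq_single l₀]
    · by_cases h1 : Ypot a ω ∈ B
      · by_cases h2 : ω ∈ Apast A K b
        · rw [if_pos h1, if_pos h2, mul_one, mul_one]
          have hmem : ω ∈ {ω | Ypot a ω ∈ B} ∩ LLt L K l₀ ∩ Apast A K b :=
            ⟨⟨h1, fun k _ => rfl⟩, h2⟩
          rw [Set.indicator_of_mem hmem]
          -- Wsw ω = C l₀
          rw [Wsw, hCdef]
          have hfiltK : univ.filter (fun k : Fin K => (k : ℕ) < K) =
              (univ : Finset (Fin K)) := by
            ext k; simp [k.isLt]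
          rw [hfiltK]
          refine Finset.prod_congr rfl fun k _ => ?_
          have hAk : ∀ j : Fin K, A j ω = b j := fun j => h2 j j.isLt
          have hs1 : {ω' | A k ω' = A k ω} = {ω' | A k ω' = b k} := by
            rw [hAk k]
          have hs2 : Apast A (k : ℕ) (fun j => A j ω) = Apast A (k : ℕ) b :=
            Apast_congr A _ fun j _ => hAk j
          rw [hs1, hs2]
          rfl
        · rw [if_neg h2, mul_zero,
            Set.indicator_of_notMem (fun hmem => h2 hmem.2)]
      · rw [if_neg h1, mul_zero, zero_mul,
          Set.indicator_of_notMem (fun hmem => h1 hmem.1.1)]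
    · intro l _ hl
      refine Set.indicator_of_notMem (fun hmem => hl ?_) _
      funext j
      exact (hmem.1.2 j j.isLt).symm
    · intro h
      exact absurd (Finset.mem_univ l₀) h
  rw [integral_congr_ae (ae_of_all P hfun)]
  have hmeas : ∀ l : Fin K → 𝓛,
      MeasurableSet ({ω | Ypot a ω ∈ B} ∩ LLt L K l ∩ Apast A K b) := fun l =>
    (hYB.inter (measurableSet_LLt hL _ _)).inter (measurableSet_Apast hA _ _)
  rw [integral_finset_sum _ (fun l _ =>
    (integrable_const (C l)).indicator (hmeas l))]
  rw [UT]
  refine Finset.sum_congr rfl fun l _ => ?_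
  rw [integral_indicator_const (C l) (hmeas l), smul_eq_mul, mul_comm]
  rfl

end Aux

/-- Pseudo-population factorization for stabilized weights (equation (B.2.1)):
under (A2) and (A3), weighting by `W_sw` makes `Y^{ā}` and `Ā(K−1)` independent,
each with its original marginal distribution. -/
theorem sw_pseudopopulation_factorization
    {Ω : Type*} [MeasurableSpace Ω] {𝓛 : Type*} [MeasurableSpace 𝓛]
    [Fintype 𝓛] [Nonempty 𝓛] [MeasurableSingletonClass 𝓛]
    (P : Measure Ω) [IsProbabilityMeasure P]
    {K : ℕ} (hK : 1 ≤ K)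
    (A : Fin K → Ω → Bool) (L : Fin K → Ω → 𝓛)
    (hA : ∀ k, Measurable (A k)) (hL : ∀ k, Measurable (L k))
    (Ypot : (Fin K → Bool) → Ω → ℝ)
    (hYpm : ∀ a, Measurable (Ypot a)) (hYpi : ∀ a, Integrable (Ypot a) P)
    (hA2 : A2ok P A L Ypot) (hA3 : A3ok P A L) :
    ∀ (a b : Fin K → Bool) (B : Set ℝ), MeasurableSet B →
      (∫ ω, Wsw P A L ω * (if Ypot a ω ∈ B then (1 : ℝ) else 0) *
          (if ω ∈ Apast A K b then (1 : ℝ) else 0) ∂P) =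
        (P {ω | Ypot a ω ∈ B}).toReal * (P (Apast A K b)).toReal := by
  intro a b B hB
  rw [integral_eq_UT P A L hA hL Ypot hYpm a b B hB]
  by_cases hAB : P (Apast A K b) = 0
  · have hz : ∀ l : Fin K → 𝓛,
        P ({ω | Ypot a ω ∈ B} ∩ LLt L K l ∩ Apast A K b) = 0 := fun l =>
      measure_mono_null Set.inter_subset_right hAB
    rw [UT]
    simp [hz, hAB]
  · have key : ∀ t, t ≤ K →
        ((Fintype.card 𝓛 : ℝ)) ^ t * UT P A L {ω | Ypot a ω ∈ B} b t =
          (∏ k ∈ univ.filter (fun k : Fin K => (k : ℕ) < t), piT P A b k) *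
            UT P A L {ω | Ypot a ω ∈ B} b 0 := by
      intro t
      induction t with
      | zero => intro _; simp
      | succ t ih =>
        intro ht
        have htK : t < K := ht
        set tF : Fin K := ⟨t, htK⟩ with htFdef
        have hcast : ((tF : ℕ)) = t := rfl
        have hstep := UT_step P A L hA hL Ypot hYpm hA2 hA3 a b B hB tF
        rw [hcast] at hstep
        have hfilt : univ.filter (fun k : Fin K => (k : ℕ) < t + 1) =
            insert tF (univ.filter (fun k : Fin K => (k : ℕ) < t)) := by
          have := filter_lt_succ (K := K) tF
          rwa [hcast] at this
        calc ((Fintype.card 𝓛 : ℝ)) ^ (t + 1) * UT P A L {ω | Ypot a ω ∈ B} b (t + 1)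
            = (Fintype.card 𝓛 : ℝ) ^ t *
                ((Fintype.card 𝓛 : ℝ) * UT P A L {ω | Ypot a ω ∈ B} b (t + 1)) := by
              ring
          _ = (Fintype.card 𝓛 : ℝ) ^ t *
                (piT P A b tF * UT P A L {ω | Ypot a ω ∈ B} b t) := by rw [hstep]
          _ = piT P A b tF *
                ((Fintype.card 𝓛 : ℝ) ^ t * UT P A L {ω | Ypot a ω ∈ B} b t) := by ring
          _ = piT P A b tF *
                ((∏ k ∈ univ.filter (fun k : Fin K => (k : ℕ) < t), piT P A b k) *
                  UT P A L {ω | Ypot a ω ∈ B} b 0) := by rw [ih (le_of_lt htK)]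
          _ = (∏ k ∈ univ.filter (fun k : Fin K => (k : ℕ) < t + 1), piT P A b k) *
                UT P A L {ω | Ypot a ω ∈ B} b 0 := by
              rw [hfilt, Finset.prod_insert (by simp [hcast])]
              ring
    have hK' := key K le_rfl
    rw [prod_piT P A b hAB K le_rfl, UT_zero P A L {ω | Ypot a ω ∈ B} b] at hK'
    have hcard : ((Fintype.card 𝓛 : ℝ)) ^ K ≠ 0 :=
      pow_ne_zero _ (Nat.cast_ne_zero.mpr Fintype.card_ne_zero)
    have hfin : ((Fintype.card 𝓛 : ℝ)) ^ K * UT P A L {ω | Ypot a ω ∈ B} b K =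
        ((Fintype.card 𝓛 : ℝ)) ^ K *
          ((P {ω | Ypot a ω ∈ B}).toReal * (P (Apast A K b)).toReal) := by
      rw [hK']
      ring
    exact mul_left_cancel₀ hcard hfin

end MSMPaper
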